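/- Let G : S ⥤ V and G' : S' ⥤ V be functors each admitting an asymmetric lens structure (so each is the Get of an asymmetric lens, forming a cospan of asymmetric lenses). Let a commutative square in Cat with top-left vertex T and functors H : T ⥤ S, H' : T ⥤ S' over the cospan (G, G') be a pullback square (in the sense of CategoryTheory.IsPullback in Cat). Then the diagonal functor H ⋙ G : T ⥤ V admits an asymmetric lens structure: there exist a category Λ, a discrete opfibration F : Λ ⥤ V and a bijective-on-objects functor P : Λ ⥤ T with P ⋙ (H ⋙ G) = F. This is the consistency lens: the fusion of the two 1-lenses G and G' is again a 1-lens. -/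

import Mathlib

open CategoryTheory

/-- A functor `F : C ⥤ D` is a discrete opfibration if for every object `c` of `C` and
every morphism `g : F.obj c ⟶ d` in `D`, there is a unique pair of an object `c'` and a
morphism `f : c ⟶ c'` with `F.obj c' = d` and `F.map f ≫ eqToHom _ = g`. -/
def IsDiscreteOpfib {C : Type*} [Category C] {D : Type*} [Category D] (F : C ⥤ D) : Prop :=
  ∀ (c : C) ⦃d : D⦄ (g : F.obj c ⟶ d),
    ∃! p : (c' : C) × (c ⟶ c'), ∃ h : F.obj p.1 = d, F.map p.2 ≫ eqToHom h = g

/-- An asymmetric lens structure on a functor `G : S ⥤ V` (in `Cat`): a category `Λ`,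
a discrete opfibration `F : Λ ⥤ V` and a bijective-on-objects functor `P : Λ ⥤ S`
(the Put) such that `P ⋙ G = F`. -/
def HasLensStructure {S V : Cat} (G : S ⟶ V) : Prop :=
  ∃ (Λ : Cat) (F : Λ ⟶ V) (P : Λ ⟶ S),
    IsDiscreteOpfib F.toFunctor ∧ Function.Bijective P.toFunctor.obj ∧ P ≫ G = F

section PBConstruction

universe v u

variable {A : Type u} [Category.{v} A] {B : Type u} [Category.{v} B]
  {Vc : Type u} [Category.{v} Vc]

/-- Objects of the strict pullback of `F : A ⥤ Vc` and `F' : B ⥤ Vc`. -/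
structure PBObj (F : A ⥤ Vc) (F' : B ⥤ Vc) : Type u where
  a : A
  b : B
  eq : F.obj a = F'.obj b

variable {F : A ⥤ Vc} {F' : B ⥤ Vc}

/-- Morphisms of the strict pullback. -/
structure PBHom (x y : PBObj F F') : Type v where
  f : x.a ⟶ y.a
  g : x.b ⟶ y.b
  w : F.map f ≫ eqToHom y.eq = eqToHom x.eq ≫ F'.map g

theorem PBObj.ext' {x y : PBObj F F'} (ha : x.a = y.a) (hb : x.b = y.b) : x = y := by
  cases x; cases y; cases ha; cases hb; rfl

theorem PBHom.ext' {x y : PBObj F F'} {p q : PBHom x y} (hf : p.f = q.f) (hg : p.g = q.g) :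
    p = q := by
  cases p; cases q; cases hf; cases hg; rfl

instance : Category (PBObj F F') where
  Hom := PBHom
  id x := ⟨𝟙 _, 𝟙 _, by simp⟩
  comp p q := ⟨p.f ≫ q.f, p.g ≫ q.g, by
    rw [Functor.map_comp, Category.assoc, q.w, ← Category.assoc, p.w, Category.assoc,
      ← Functor.map_comp]⟩
  id_comp p := PBHom.ext' (by simp) (by simp)
  comp_id p := PBHom.ext' (by simp) (by simp)
  assoc p q r := PBHom.ext' (by simp) (by simp)

@[simp] theorem PB_comp_f {x y z : PBObj F F'} (p : x ⟶ y) (q : y ⟶ z) :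
    (p ≫ q).f = p.f ≫ q.f := rfl

@[simp] theorem PB_comp_g {x y z : PBObj F F'} (p : x ⟶ y) (q : y ⟶ z) :
    (p ≫ q).g = p.g ≫ q.g := rfl

@[simp] theorem PB_id_f (x : PBObj F F') : PBHom.f (𝟙 x) = 𝟙 x.a := rfl

@[simp] theorem PB_id_g (x : PBObj F F') : PBHom.g (𝟙 x) = 𝟙 x.b := rfl

theorem PB_comp_eqToHom_f {x y z w : PBObj F F'} (h1 : x = y) (q : y ⟶ z) (h2 : z = w) :
    (eqToHom h1 ≫ q ≫ eqToHom h2).f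
      = eqToHom (congrArg PBObj.a h1) ≫ q.f ≫ eqToHom (congrArg PBObj.a h2) := by
  subst h1; subst h2
  simp only [eqToHom_refl, Category.comp_id, Category.id_comp]

theorem PB_comp_eqToHom_g {x y z w : PBObj F F'} (h1 : x = y) (q : y ⟶ z) (h2 : z = w) :
    (eqToHom h1 ≫ q ≫ eqToHom h2).g
      = eqToHom (congrArg PBObj.b h1) ≫ q.g ≫ eqToHom (congrArg PBObj.b h2) := by
  subst h1; subst h2
  simp only [eqToHom_refl, Category.comp_id, Category.id_comp]

theorem PB_eqToHom_f {x y : PBObj F F'} (h : x = y) :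
    (eqToHom h).f = eqToHom (congrArg PBObj.a h) := by subst h; rfl

theorem PB_eqToHom_g {x y : PBObj F F'} (h : x = y) :
    (eqToHom h).g = eqToHom (congrArg PBObj.b h) := by subst h; rfl

variable (F F')

/-- First projection of the strict pullback. -/
def pbFst' : PBObj F F' ⥤ A where
  obj x := x.a
  map p := p.f

/-- Second projection of the strict pullback. -/
def pbSnd' : PBObj F F' ⥤ B where
  obj x := x.b
  map p := p.g

end PBConstruction

section PBCat

universe v u

variable {S S' V : Cat.{v, u}} (G : S ⟶ V) (G' : S' ⟶ V)

/-- The strict pullback as an object of `Cat`. -/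
abbrev pbCat : Cat.{v, u} := ⟨PBObj G.toFunctor G'.toFunctor, inferInstance⟩

/-- First projection, as a morphism of `Cat`. -/
def pbFst : pbCat G G' ⟶ S := (pbFst' G.toFunctor G'.toFunctor).toCatHom

/-- Second projection, as a morphism of `Cat`. -/
def pbSnd : pbCat G G' ⟶ S' := (pbSnd' G.toFunctor G'.toFunctor).toCatHom

theorem pb_comm : pbFst G G' ≫ G = pbSnd G G' ≫ G' := by
  refine Cat.Hom.ext (CategoryTheory.Functor.ext (fun (x : PBObj G.toFunctor G'.toFunctor) => x.eq) (fun x y p => ?_))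
  show G.toFunctor.map p.f = eqToHom x.eq ≫ G'.toFunctor.map p.g ≫ eqToHom y.eq.symm
  rw [← Category.assoc, ← p.w]
  simp

/-- The lift of a pullback cone to the strict pullback. -/
def pbLift (s : Limits.PullbackCone G G') : s.pt ⟶ pbCat G G' := Functor.toCatHom
  { obj w := ⟨s.fst.toFunctor.obj w, s.snd.toFunctor.obj w,
      Functor.congr_obj (congrArg Cat.Hom.toFunctor s.condition) w⟩
    map {w₁ w₂} p := ⟨s.fst.toFunctor.map p, s.snd.toFunctor.map p, by
      have := Functor.congr_hom (congrArg Cat.Hom.toFunctor s.condition) p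
      simp only [Cat.Hom.comp_toFunctor, Functor.comp_map] at this
      rw [this]
      simp⟩
    map_id w := PBHom.ext' (s.fst.toFunctor.map_id w) (s.snd.toFunctor.map_id w)
    map_comp p q := PBHom.ext' (s.fst.toFunctor.map_comp p q) (s.snd.toFunctor.map_comp p q) }

theorem pb_isPullback : IsPullback (pbFst G G') (pbSnd G G') G G' := by
  apply IsPullback.of_isLimit (c := Limits.PullbackCone.mk _ _ (pb_comm G G'))
  apply Limits.PullbackCone.IsLimit.mk (pb_comm G G') (fun s => pbLift G G' s)
    (fun s => rfl) (fun s => rfl)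
  intro s m hm₁ hm₂
  have hobj : ∀ w, m.toFunctor.obj w = (pbLift G G' s).toFunctor.obj w := by
    intro w
    exact PBObj.ext' (Functor.congr_obj (congrArg Cat.Hom.toFunctor hm₁) w) (Functor.congr_obj (congrArg Cat.Hom.toFunctor hm₂) w)
  refine Cat.Hom.ext (CategoryTheory.Functor.ext hobj (fun w₁ w₂ p => ?_))
  apply PBHom.ext'
  · rw [PB_comp_eqToHom_f]
    exact Functor.congr_hom (congrArg Cat.Hom.toFunctor hm₁) p
  · rw [PB_comp_eqToHom_g]
    exact Functor.congr_hom (congrArg Cat.Hom.toFunctor hm₂) p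

/-- In any pullback square in `Cat`, the two projections are jointly injective
on objects. -/
theorem pb_jointly_inj {T : Cat.{v, u}} {H : T ⟶ S} {H' : T ⟶ S'}
    (hpb : IsPullback H H' G G') {t₁ t₂ : T}
    (h₁ : H.toFunctor.obj t₁ = H.toFunctor.obj t₂) (h₂ : H'.toFunctor.obj t₁ = H'.toFunctor.obj t₂) : t₁ = t₂ := by
  let e := hpb.isoIsPullback _ _ (pb_isPullback G G')
  have he₁ : e.hom ≫ pbFst G G' = H := hpb.isoIsPullback_hom_fst _ _ (pb_isPullback G G')
  have he₂ : e.hom ≫ pbSnd G G' = H' := hpb.isoIsPullback_hom_snd _ _ (pb_isPullback G G')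
  have hee : ∀ t : T, (e.inv).toFunctor.obj ((e.hom).toFunctor.obj t) = t := fun t =>
    Functor.congr_obj (congrArg Cat.Hom.toFunctor e.hom_inv_id) t
  have : (e.hom).toFunctor.obj t₁ = (e.hom).toFunctor.obj t₂ := by
    apply PBObj.ext'
    · have a₁ := Functor.congr_obj (congrArg Cat.Hom.toFunctor he₁) t₁
      have a₂ := Functor.congr_obj (congrArg Cat.Hom.toFunctor he₁) t₂
      simp only [Cat.Hom.comp_obj] at a₁ a₂
      calc ((e.hom).toFunctor.obj t₁).a = H.toFunctor.obj t₁ := a₁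
        _ = H.toFunctor.obj t₂ := h₁
        _ = ((e.hom).toFunctor.obj t₂).a := a₂.symm
    · have a₁ := Functor.congr_obj (congrArg Cat.Hom.toFunctor he₂) t₁
      have a₂ := Functor.congr_obj (congrArg Cat.Hom.toFunctor he₂) t₂
      simp only [Cat.Hom.comp_obj] at a₁ a₂
      calc ((e.hom).toFunctor.obj t₁).b = H'.toFunctor.obj t₁ := a₁
        _ = H'.toFunctor.obj t₂ := h₂
        _ = ((e.hom).toFunctor.obj t₂).b := a₂.symm
  calc t₁ = (e.inv).toFunctor.obj ((e.hom).toFunctor.obj t₁) := (hee t₁).symm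
    _ = (e.inv).toFunctor.obj ((e.hom).toFunctor.obj t₂) := by rw [this]
    _ = t₂ := hee t₂

end PBCat

/-- The diagonal of the strict pullback of two discrete opfibrations is a discrete
opfibration. -/
theorem pb_diag_dopf {Λ Λ' V : Cat} (F : Λ ⟶ V) (F' : Λ' ⟶ V)
    (hF : IsDiscreteOpfib F.toFunctor) (hF' : IsDiscreteOpfib F'.toFunctor) :
    IsDiscreteOpfib (pbFst F F' ≫ F).toFunctor := by
  rintro ⟨a, a', hx⟩ v (g : F.toFunctor.obj a ⟶ v)
  obtain ⟨⟨b, f⟩, ⟨hb, hfb⟩, hu⟩ := hF a g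
  obtain ⟨⟨b', f'⟩, ⟨hb', hfb'⟩, hu'⟩ := hF' a' (eqToHom hx.symm ≫ g)
  have h1 : F.toFunctor.map f = g ≫ eqToHom hb.symm := by rw [← hfb]; simp
  have h2 : F'.toFunctor.map f' = eqToHom hx.symm ≫ g ≫ eqToHom hb'.symm := by
    calc F'.toFunctor.map f' = (F'.toFunctor.map f' ≫ eqToHom hb') ≫ eqToHom hb'.symm := by simp
      _ = eqToHom hx.symm ≫ g ≫ eqToHom hb'.symm := by rw [hfb']; simp
  refine ⟨⟨⟨b, b', hb.trans hb'.symm⟩, ⟨f, f', ?_⟩⟩, ⟨hb, hfb⟩, ?_⟩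
  · rw [h1, h2]
    simp
  · rintro ⟨⟨c, c', hz⟩, ⟨k, k', hw⟩⟩ ⟨hcv, hk⟩
    have hcv : F.toFunctor.obj c = v := hcv
    have hk : F.toFunctor.map k ≫ eqToHom hcv = g := hk
    have e1 := hu ⟨c, k⟩ ⟨hcv, hk⟩
    have hzv : F'.toFunctor.obj c' = v := hz.symm.trans hcv
    have hk' : F'.toFunctor.map k' ≫ eqToHom hzv = eqToHom hx.symm ≫ g := by
      have : F'.toFunctor.map k' = eqToHom hx.symm ≫ F.toFunctor.map k ≫ eqToHom hz := by
        rw [hw, ← Category.assoc, eqToHom_trans, eqToHom_refl, Category.id_comp]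
      rw [this]
      simp only [Category.assoc, eqToHom_trans]
      rw [← hk]
    have e2 := hu' ⟨c', k'⟩ ⟨hzv, hk'⟩
    injection e1 with hc hkf
    injection e2 with hc' hkf'
    subst hc; subst hc'
    have hkf : k = f := eq_of_heq hkf
    have hkf' : k' = f' := eq_of_heq hkf'
    subst hkf; subst hkf'
    rfl

/-- The consistency lens: fusing two 1-lenses with common codomain, i.e. the diagonal of
the pullback of their Gets, is again a 1-lens. -/
theorem consistency_lens {T S S' V : Cat}
    (G : S ⟶ V) (G' : S' ⟶ V) (H : T ⟶ S) (H' : T ⟶ S')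
    (hG : HasLensStructure G) (hG' : HasLensStructure G')
    (hpb : IsPullback H H' G G') :
    HasLensStructure (H ≫ G) := by
  obtain ⟨Λ, F, P, hF, hPbij, hPG⟩ := hG
  obtain ⟨Λ', F', P', hF', hP'bij, hP'G'⟩ := hG'
  have w : (pbFst F F' ≫ P) ≫ G = (pbSnd F F' ≫ P') ≫ G' := by
    rw [Category.assoc, hPG, Category.assoc, hP'G', pb_comm]
  set L := hpb.lift (pbFst F F' ≫ P) (pbSnd F F' ≫ P') w with hL
  have hLH : L ≫ H = pbFst F F' ≫ P := hpb.lift_fst _ _ w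
  have hLH' : L ≫ H' = pbSnd F F' ≫ P' := hpb.lift_snd _ _ w
  refine ⟨pbCat F F', pbFst F F' ≫ F, L, pb_diag_dopf F F' hF hF', ⟨?_, ?_⟩, ?_⟩
  · -- injective
    intro x y hxy
    have e₁ : P.toFunctor.obj x.a = P.toFunctor.obj y.a := by
      have a₁ := Functor.congr_obj (congrArg Cat.Hom.toFunctor hLH) x
      have a₂ := Functor.congr_obj (congrArg Cat.Hom.toFunctor hLH) y
      simp only [Cat.Hom.comp_obj] at a₁ a₂
      exact a₁.symm.trans ((congrArg H.toFunctor.obj hxy).trans a₂)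
    have e₂ : P'.toFunctor.obj x.b = P'.toFunctor.obj y.b := by
      have a₁ := Functor.congr_obj (congrArg Cat.Hom.toFunctor hLH') x
      have a₂ := Functor.congr_obj (congrArg Cat.Hom.toFunctor hLH') y
      simp only [Cat.Hom.comp_obj] at a₁ a₂
      exact a₁.symm.trans ((congrArg H'.toFunctor.obj hxy).trans a₂)
    exact PBObj.ext' (hPbij.1 e₁) (hP'bij.1 e₂)
  · -- surjective
    intro t
    obtain ⟨a, ha⟩ := hPbij.2 (H.toFunctor.obj t)
    obtain ⟨a', ha'⟩ := hP'bij.2 (H'.toFunctor.obj t)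
    have hx : F.toFunctor.obj a = F'.toFunctor.obj a' := by
      have h₁ := Functor.congr_obj (congrArg Cat.Hom.toFunctor hPG) a
      have h₂ := Functor.congr_obj (congrArg Cat.Hom.toFunctor hP'G') a'
      have h₃ := Functor.congr_obj (congrArg Cat.Hom.toFunctor hpb.w) t
      simp only [Cat.Hom.comp_obj] at h₁ h₂ h₃
      rw [← h₁, ← h₂, ha, ha', h₃]
    refine ⟨⟨a, a', hx⟩, ?_⟩
    apply pb_jointly_inj G G' hpb
    · have := Functor.congr_obj (congrArg Cat.Hom.toFunctor hLH) (⟨a, a', hx⟩ : PBObj F.toFunctor F'.toFunctor)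
      simp only [Cat.Hom.comp_obj] at this
      rw [this]
      exact ha.trans rfl ▸ ha
    · have := Functor.congr_obj (congrArg Cat.Hom.toFunctor hLH') (⟨a, a', hx⟩ : PBObj F.toFunctor F'.toFunctor)
      simp only [Cat.Hom.comp_obj] at this
      rw [this]
      exact ha'
  · -- composition equation
    rw [← Category.assoc, hLH, Category.assoc, hPG]
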